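/- Let ⊕ be the drastic T-conorm T_d' and ⊗ a T-norm with no zero divisors (x⊗y = 0 implies x = 0 or y = 0). Then for all 0 ≤ x₁ ≤ x₂ ≤ 1 and 0 ≤ y₁ ≤ y₂ ≤ 1: (x₁⊗y₁) ⊕ (x₂⊗y₂) ≥ (x₁⊗y₂) ⊕ (x₂⊗y₁), hence (⊗, T_d') satisfies the rearrangement inequality. -/
import Mathlib
open Set

def IsUninorm (f : ℝ → ℝ → ℝ) : Prop :=
  (∀ x ∈ Icc (0:ℝ) 1, ∀ y ∈ Icc (0:ℝ) 1, f x y ∈ Icc (0:ℝ) 1) ∧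
  (∀ x ∈ Icc (0:ℝ) 1, ∀ y ∈ Icc (0:ℝ) 1, f x y = f y x) ∧
  (∀ x ∈ Icc (0:ℝ) 1, ∀ y ∈ Icc (0:ℝ) 1, ∀ z ∈ Icc (0:ℝ) 1, f (f x y) z = f x (f y z)) ∧
  (∀ x ∈ Icc (0:ℝ) 1, ∀ y ∈ Icc (0:ℝ) 1, ∀ z ∈ Icc (0:ℝ) 1, x ≤ y → f x z ≤ f y z) ∧
  (∃ e ∈ Icc (0:ℝ) 1, ∀ x ∈ Icc (0:ℝ) 1, f x e = x)

def iterOp (op : ℝ → ℝ → ℝ) : (n : ℕ) → (Fin (n+1) → ℝ) → ℝ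
  | 0, v => v 0
  | n+1, v => op (iterOp op n (fun i => v i.castSucc)) (v (Fin.last (n+1)))

def RearrangementIneq (ot op : ℝ → ℝ → ℝ) : Prop :=
  ∀ n : ℕ, ∀ x y : Fin (n+1) → ℝ,
    Monotone x → Monotone y →
    (∀ i, x i ∈ Icc (0:ℝ) 1) → (∀ i, y i ∈ Icc (0:ℝ) 1) →
    ∀ σ : Equiv.Perm (Fin (n+1)),
      iterOp op n (fun i => ot (x i.rev) (y i)) ≤
          iterOp op n (fun i => ot (x (σ i)) (y i)) ∧
        iterOp op n (fun i => ot (x (σ i)) (y i)) ≤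
          iterOp op n (fun i => ot (x i) (y i))

def DualRearrangementIneq (ot op : ℝ → ℝ → ℝ) : Prop :=
  ∀ n : ℕ, ∀ x y : Fin (n+1) → ℝ,
    Monotone x → Monotone y →
    (∀ i, x i ∈ Icc (0:ℝ) 1) → (∀ i, y i ∈ Icc (0:ℝ) 1) →
    ∀ σ : Equiv.Perm (Fin (n+1)),
      iterOp ot n (fun i => op (x i) (y i)) ≤
          iterOp ot n (fun i => op (x (σ i)) (y i)) ∧
        iterOp ot n (fun i => op (x (σ i)) (y i)) ≤
          iterOp ot n (fun i => op (x i.rev) (y i))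

def IsTnorm (f : ℝ → ℝ → ℝ) : Prop :=
  (∀ x ∈ Icc (0:ℝ) 1, ∀ y ∈ Icc (0:ℝ) 1, f x y ∈ Icc (0:ℝ) 1) ∧
  (∀ x ∈ Icc (0:ℝ) 1, ∀ y ∈ Icc (0:ℝ) 1, f x y = f y x) ∧
  (∀ x ∈ Icc (0:ℝ) 1, ∀ y ∈ Icc (0:ℝ) 1, ∀ z ∈ Icc (0:ℝ) 1, f (f x y) z = f x (f y z)) ∧
  (∀ x ∈ Icc (0:ℝ) 1, ∀ y ∈ Icc (0:ℝ) 1, ∀ z ∈ Icc (0:ℝ) 1, x ≤ y → f x z ≤ f y z) ∧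
  (∀ x ∈ Icc (0:ℝ) 1, f x 1 = x)

noncomputable def Td' (x y : ℝ) : ℝ := if min x y = 0 then max x y else 1

/-! ### Auxiliary lemmas about `Td'` and `iterOp Td'` -/

lemma Td'_mem {a b : ℝ} (ha : a ∈ Icc (0:ℝ) 1) (hb : b ∈ Icc (0:ℝ) 1) :
    Td' a b ∈ Icc (0:ℝ) 1 := by
  unfold Td'
  split_ifs with h
  · exact ⟨le_max_of_le_left ha.1, max_le ha.2 hb.2⟩
  · exact ⟨zero_le_one, le_refl 1⟩

lemma Td'_zero_left {a : ℝ} (ha : 0 ≤ a) : Td' 0 a = a := by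
  unfold Td'; rw [min_eq_left ha, if_pos rfl, max_eq_right ha]

lemma Td'_zero_right {a : ℝ} (ha : 0 ≤ a) : Td' a 0 = a := by
  unfold Td'; rw [min_eq_right ha, if_pos rfl, max_eq_left ha]

lemma Td'_pos_pos {a b : ℝ} (ha : 0 < a) (hb : 0 < b) : Td' a b = 1 := by
  unfold Td'; rw [if_neg]; exact ne_of_gt (lt_min ha hb)

lemma Td'_one_left {b : ℝ} (hb : b ∈ Icc (0:ℝ) 1) : Td' 1 b = 1 := by
  rcases eq_or_lt_of_le hb.1 with h | h
  · rw [← h, Td'_zero_right zero_le_one]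
  · exact Td'_pos_pos one_pos h

lemma Td'_le_left {a b : ℝ} (ha : a ∈ Icc (0:ℝ) 1) (_hb : b ∈ Icc (0:ℝ) 1) :
    a ≤ Td' a b := by
  unfold Td'; split_ifs with h
  · exact le_max_left _ _
  · exact ha.2

lemma Td'_le_right {a b : ℝ} (_ha : a ∈ Icc (0:ℝ) 1) (hb : b ∈ Icc (0:ℝ) 1) :
    b ≤ Td' a b := by
  unfold Td'; split_ifs with h
  · exact le_max_right _ _
  · exact hb.2

lemma iter_mem {n : ℕ} {v : Fin (n+1) → ℝ} (hv : ∀ i, v i ∈ Icc (0:ℝ) 1) :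
    iterOp Td' n v ∈ Icc (0:ℝ) 1 := by
  induction n with
  | zero => exact hv 0
  | succ n ih => exact Td'_mem (ih (fun i => hv i.castSucc)) (hv (Fin.last (n+1)))

lemma le_iter {n : ℕ} {v : Fin (n+1) → ℝ} (hv : ∀ i, v i ∈ Icc (0:ℝ) 1)
    (i : Fin (n+1)) : v i ≤ iterOp Td' n v := by
  induction n with
  | zero =>
    have : i = 0 := Fin.ext (by omega)
    rw [this]; exact le_refl _
  | succ n ih =>
    rcases Fin.eq_castSucc_or_eq_last i with ⟨j, rfl⟩ | rfl
    · exact le_trans (ih (fun k => hv k.castSucc) j)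
        (Td'_le_left (iter_mem (fun k => hv k.castSucc)) (hv (Fin.last (n+1))))
    · exact Td'_le_right (iter_mem (fun k => hv k.castSucc)) (hv (Fin.last (n+1)))

lemma iter_eq_of_unique {n : ℕ} {v : Fin (n+1) → ℝ} (hv : ∀ i, 0 ≤ v i)
    (i₀ : Fin (n+1)) (h : ∀ j, j ≠ i₀ → v j = 0) : iterOp Td' n v = v i₀ := by
  induction n with
  | zero =>
    have : i₀ = 0 := Fin.ext (by omega)
    rw [this]; rfl
  | succ n ih =>
    rcases Fin.eq_castSucc_or_eq_last i₀ with ⟨j₀, rfl⟩ | rfl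
    · have hlast : v (Fin.last (n+1)) = 0 := h _ (by simp [Fin.ext_iff]; omega)
      have heq : iterOp Td' n (fun i => v i.castSucc) = v j₀.castSucc := by
        apply ih (fun i => hv i.castSucc)
        intro j hj
        exact h _ (fun hc => hj (Fin.castSucc_injective _ hc))
      show Td' _ _ = _
      rw [heq, hlast, Td'_zero_right (hv _)]
    · have heq : iterOp Td' n (fun i => v i.castSucc) = 0 := by
        have h0 : ∀ i : Fin (n+1), v i.castSucc = 0 :=
          fun i => h _ (by simp [Fin.ext_iff]; omega)
        rw [ih (fun i => hv i.castSucc) 0 (fun j _ => h0 j)]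
        exact h0 0
      show Td' _ _ = _
      rw [heq, Td'_zero_left (hv _)]

lemma iter_eq_one {n : ℕ} {v : Fin (n+1) → ℝ} (hv : ∀ i, v i ∈ Icc (0:ℝ) 1)
    {i j : Fin (n+1)} (hij : i ≠ j) (hi : 0 < v i) (hj : 0 < v j) :
    iterOp Td' n v = 1 := by
  induction n with
  | zero => exact absurd (Fin.ext (by omega : (i:ℕ) = j)) hij
  | succ n ih =>
    show Td' _ _ = 1
    rcases Fin.eq_castSucc_or_eq_last i with ⟨i', rfl⟩ | rfl
    · rcases Fin.eq_castSucc_or_eq_last j with ⟨j', rfl⟩ | rfl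
      · rw [ih (fun k => hv k.castSucc)
          (fun hc => hij (congrArg Fin.castSucc hc)) hi hj]
        exact Td'_one_left (hv _)
      · have hp : (0:ℝ) < iterOp Td' n (fun k => v k.castSucc) :=
          lt_of_lt_of_le hi (le_iter (fun k => hv k.castSucc) i')
        exact Td'_pos_pos hp hj
    · rcases Fin.eq_castSucc_or_eq_last j with ⟨j', rfl⟩ | rfl
      · have hp : (0:ℝ) < iterOp Td' n (fun k => v k.castSucc) :=
          lt_of_lt_of_le hj (le_iter (fun k => hv k.castSucc) j')
        exact Td'_pos_pos hp hi
      · exact absurd rfl hij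

lemma key_le {n : ℕ} {a b : Fin (n+1) → ℝ}
    (ha : ∀ i, a i ∈ Icc (0:ℝ) 1) (hb : ∀ i, b i ∈ Icc (0:ℝ) 1)
    (h1 : (∃ i j, i ≠ j ∧ 0 < a i ∧ 0 < a j) → ∃ i j, i ≠ j ∧ 0 < b i ∧ 0 < b j)
    (h2 : ∀ i₀, 0 < a i₀ → ∃ k, a i₀ ≤ b k) :
    iterOp Td' n a ≤ iterOp Td' n b := by
  by_cases htwo : ∃ i j, i ≠ j ∧ 0 < a i ∧ 0 < a j
  · obtain ⟨i, j, hij, hi, hj⟩ := h1 htwo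
    rw [iter_eq_one hb hij hi hj]
    exact (iter_mem ha).2
  · by_cases hpos : ∃ i, 0 < a i
    · obtain ⟨i₀, hi₀⟩ := hpos
      have huniq : ∀ j, j ≠ i₀ → a j = 0 := by
        intro j hj
        by_contra hc
        exact htwo ⟨j, i₀, hj, lt_of_le_of_ne (ha j).1 (Ne.symm hc), hi₀⟩
      rw [iter_eq_of_unique (fun i => (ha i).1) i₀ huniq]
      obtain ⟨k, hk⟩ := h2 i₀ hi₀
      exact le_trans hk (le_iter hb k)
    · push_neg at hpos
      have hz : ∀ i, a i = 0 := fun i => le_antisymm (hpos i) (ha i).1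
      rw [iter_eq_of_unique (fun i => (ha i).1) 0 (fun j _ => hz j), hz 0]
      exact (iter_mem hb).1

lemma inter_card {α : Type*} [Fintype α] [DecidableEq α] (A B : Finset α) (m : ℕ)
    (h : Fintype.card α + m ≤ A.card + B.card) : m ≤ (A ∩ B).card := by
  have h1 := Finset.card_union_add_card_inter A B
  have h2 : (A ∪ B).card ≤ Fintype.card α :=
    le_trans (Finset.card_le_univ _) (le_of_eq Finset.card_univ)
  omega

lemma pigeon {n : ℕ} (σ : Equiv.Perm (Fin (n+1))) (c d : Fin (n+1)) (m : ℕ)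
    (h : (n+2) + m ≤ (n+1 - (c:ℕ)) + (n+1 - (d:ℕ))) :
    1 + m ≤ ((Finset.univ.filter (fun k => c ≤ σ k)) ∩ (Finset.Ici d)).card := by
  apply inter_card
  have hA : (Finset.univ.filter (fun k => c ≤ σ k)) = (Finset.Ici c).image σ.symm := by
    ext k
    simp only [Finset.mem_filter, Finset.mem_univ, true_and, Finset.mem_image,
      Finset.mem_Ici]
    constructor
    · intro hk; exact ⟨σ k, hk, σ.symm_apply_apply k⟩
    · rintro ⟨m', hm', rfl⟩; rwa [σ.apply_symm_apply]
  rw [hA, Finset.card_image_of_injective _ σ.symm.injective, Fin.card_Ici, Fin.card_Ici,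
    Fintype.card_fin]
  have := c.isLt
  have := d.isLt
  omega

/-! ### Lemmas about t-norms -/

lemma ot_zero_right {ot : ℝ → ℝ → ℝ} (hot : IsTnorm ot) {a : ℝ}
    (ha : a ∈ Icc (0:ℝ) 1) : ot a 0 = 0 := by
  have h01 : (0:ℝ) ∈ Icc (0:ℝ) 1 := ⟨le_refl 0, zero_le_one⟩
  have h11 : (1:ℝ) ∈ Icc (0:ℝ) 1 := ⟨zero_le_one, le_refl 1⟩
  have h1 : ot a 0 ≤ ot 1 0 := hot.2.2.2.1 a ha 1 h11 0 h01 ha.2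
  have h2 : ot 1 0 = 0 := by
    rw [hot.2.1 1 h11 0 h01]; exact hot.2.2.2.2 0 h01
  have h3 : 0 ≤ ot a 0 := (hot.1 a ha 0 h01).1
  linarith

lemma ot_zero_left {ot : ℝ → ℝ → ℝ} (hot : IsTnorm ot) {a : ℝ}
    (ha : a ∈ Icc (0:ℝ) 1) : ot 0 a = 0 := by
  rw [hot.2.1 0 ⟨le_refl 0, zero_le_one⟩ a ha]; exact ot_zero_right hot ha

lemma ot_mono {ot : ℝ → ℝ → ℝ} (hot : IsTnorm ot) {a₁ a₂ b₁ b₂ : ℝ}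
    (ha₁ : a₁ ∈ Icc (0:ℝ) 1) (ha₂ : a₂ ∈ Icc (0:ℝ) 1)
    (hb₁ : b₁ ∈ Icc (0:ℝ) 1) (hb₂ : b₂ ∈ Icc (0:ℝ) 1)
    (h1 : a₁ ≤ a₂) (h2 : b₁ ≤ b₂) : ot a₁ b₁ ≤ ot a₂ b₂ := by
  have s1 : ot a₁ b₁ ≤ ot a₂ b₁ := hot.2.2.2.1 a₁ ha₁ a₂ ha₂ b₁ hb₁ h1
  have s2 : ot a₂ b₁ ≤ ot a₂ b₂ := by
    rw [hot.2.1 a₂ ha₂ b₁ hb₁, hot.2.1 a₂ ha₂ b₂ hb₂]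
    exact hot.2.2.2.1 b₁ hb₁ b₂ hb₂ a₂ ha₂ h2
  linarith

lemma ot_pos_iff {ot : ℝ → ℝ → ℝ} (hot : IsTnorm ot)
    (hnzd : ∀ x ∈ Icc (0:ℝ) 1, ∀ y ∈ Icc (0:ℝ) 1, ot x y = 0 → x = 0 ∨ y = 0)
    {a b : ℝ} (ha : a ∈ Icc (0:ℝ) 1) (hb : b ∈ Icc (0:ℝ) 1) :
    0 < ot a b ↔ 0 < a ∧ 0 < b := by
  constructor
  · intro h
    constructor
    · rcases eq_or_lt_of_le ha.1 with h' | h'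
      · rw [← h', ot_zero_left hot hb] at h; exact absurd h (lt_irrefl 0)
      · exact h'
    · rcases eq_or_lt_of_le hb.1 with h' | h'
      · rw [← h', ot_zero_right hot ha] at h; exact absurd h (lt_irrefl 0)
      · exact h'
  · rintro ⟨ha', hb'⟩
    rcases eq_or_lt_of_le (hot.1 a ha b hb).1 with h' | h'
    · rcases hnzd a ha b hb h'.symm with h | h
      · exact absurd h (ne_of_gt ha')
      · exact absurd h (ne_of_gt hb')
    · exact h'

theorem tnorm_no_zero_divisors_with_drastic_tconorm (ot : ℝ → ℝ → ℝ)
    (hot : IsTnorm ot)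
    (hnzd : ∀ x ∈ Icc (0:ℝ) 1, ∀ y ∈ Icc (0:ℝ) 1, ot x y = 0 → x = 0 ∨ y = 0) :
    (∀ x₁ x₂ y₁ y₂ : ℝ, 0 ≤ x₁ → x₁ ≤ x₂ → x₂ ≤ 1 → 0 ≤ y₁ → y₁ ≤ y₂ → y₂ ≤ 1 →
      Td' (ot x₁ y₂) (ot x₂ y₁) ≤ Td' (ot x₁ y₁) (ot x₂ y₂)) ∧
    RearrangementIneq ot Td' := by
  constructor
  · -- the 2×2 case
    intro x₁ x₂ y₁ y₂ hx0 hx12 hx21 hy0 hy12 hy21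
    have hx₁ : x₁ ∈ Icc (0:ℝ) 1 := ⟨hx0, le_trans hx12 hx21⟩
    have hx₂ : x₂ ∈ Icc (0:ℝ) 1 := ⟨le_trans hx0 hx12, hx21⟩
    have hy₁ : y₁ ∈ Icc (0:ℝ) 1 := ⟨hy0, le_trans hy12 hy21⟩
    have hy₂ : y₂ ∈ Icc (0:ℝ) 1 := ⟨le_trans hy0 hy12, hy21⟩
    have m12 := hot.1 x₁ hx₁ y₂ hy₂
    have m21 := hot.1 x₂ hx₂ y₁ hy₁
    have m22 := hot.1 x₂ hx₂ y₂ hy₂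
    rcases eq_or_lt_of_le hx0 with hx | hx
    · -- x₁ = 0
      rw [← hx, ot_zero_left hot hy₂, ot_zero_left hot hy₁,
        Td'_zero_left m21.1, Td'_zero_left m22.1]
      exact ot_mono hot hx₂ hx₂ hy₁ hy₂ (le_refl x₂) hy12
    · rcases eq_or_lt_of_le hy0 with hy | hy
      · -- y₁ = 0
        rw [← hy, ot_zero_right hot hx₂, ot_zero_right hot hx₁,
          Td'_zero_right m12.1, Td'_zero_left m22.1]
        exact ot_mono hot hx₁ hx₂ hy₂ hy₂ hx12 (le_refl y₂)
      · -- all positive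
        have p12 : 0 < ot x₁ y₂ :=
          (ot_pos_iff hot hnzd hx₁ hy₂).2 ⟨hx, lt_of_lt_of_le hy hy12⟩
        have p21 : 0 < ot x₂ y₁ :=
          (ot_pos_iff hot hnzd hx₂ hy₁).2 ⟨lt_of_lt_of_le hx hx12, hy⟩
        have p11 : 0 < ot x₁ y₁ := (ot_pos_iff hot hnzd hx₁ hy₁).2 ⟨hx, hy⟩
        have p22 : 0 < ot x₂ y₂ :=
          (ot_pos_iff hot hnzd hx₂ hy₂).2 ⟨lt_of_lt_of_le hx hx12, lt_of_lt_of_le hy hy12⟩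
        rw [Td'_pos_pos p12 p21, Td'_pos_pos p11 p22]
  · -- the rearrangement inequality
    intro n x y hxm hym hx hy σ
    have hma : ∀ i : Fin (n+1), ot (x i.rev) (y i) ∈ Icc (0:ℝ) 1 :=
      fun i => hot.1 _ (hx _) _ (hy _)
    have hmb : ∀ i : Fin (n+1), ot (x (σ i)) (y i) ∈ Icc (0:ℝ) 1 :=
      fun i => hot.1 _ (hx _) _ (hy _)
    have hmc : ∀ i : Fin (n+1), ot (x i) (y i) ∈ Icc (0:ℝ) 1 :=
      fun i => hot.1 _ (hx _) _ (hy _)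
    constructor
    · -- rev ≤ σ
      apply key_le hma hmb
      · -- two positive terms transfer
        rintro ⟨i, j, hij, hi, hj⟩
        obtain ⟨hxi, hyi⟩ := (ot_pos_iff hot hnzd (hx _) (hy _)).1 hi
        obtain ⟨hxj, hyj⟩ := (ot_pos_iff hot hnzd (hx _) (hy _)).1 hj
        -- wlog i < j
        rcases lt_or_gt_of_ne hij with hlt | hlt
        rotate_left
        · exact (by
            -- swap roles of i and j
            have hp := pigeon σ i.rev j 1 (by
              have h1 := i.isLt; have h2 := j.isLt
              have h3 : (j:ℕ) < (i:ℕ) := hlt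
              rw [Fin.val_rev]; omega)
            obtain ⟨k, hk, l, hl, hkl⟩ := Finset.one_lt_card.1 hp
            rw [Finset.mem_inter, Finset.mem_filter, Finset.mem_Ici] at hk hl
            refine ⟨k, l, hkl, ?_, ?_⟩
            · exact (ot_pos_iff hot hnzd (hx _) (hy _)).2
                ⟨lt_of_lt_of_le hxi (hxm hk.1.2), lt_of_lt_of_le hyj (hym hk.2)⟩
            · exact (ot_pos_iff hot hnzd (hx _) (hy _)).2
                ⟨lt_of_lt_of_le hxi (hxm hl.1.2), lt_of_lt_of_le hyj (hym hl.2)⟩)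
        · have hp := pigeon σ j.rev i 1 (by
            have h1 := i.isLt; have h2 := j.isLt
            have h3 : (i:ℕ) < (j:ℕ) := hlt
            rw [Fin.val_rev]; omega)
          obtain ⟨k, hk, l, hl, hkl⟩ := Finset.one_lt_card.1 hp
          rw [Finset.mem_inter, Finset.mem_filter, Finset.mem_Ici] at hk hl
          refine ⟨k, l, hkl, ?_, ?_⟩
          · exact (ot_pos_iff hot hnzd (hx _) (hy _)).2
              ⟨lt_of_lt_of_le hxj (hxm hk.1.2), lt_of_lt_of_le hyi (hym hk.2)⟩
          · exact (ot_pos_iff hot hnzd (hx _) (hy _)).2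
              ⟨lt_of_lt_of_le hxj (hxm hl.1.2), lt_of_lt_of_le hyi (hym hl.2)⟩
      · -- single positive term dominated
        intro i₀ hi₀
        have hp := pigeon σ i₀.rev i₀ 0 (by
          have h1 := i₀.isLt
          rw [Fin.val_rev]; omega)
        have hne : ((Finset.univ.filter (fun k => i₀.rev ≤ σ k)) ∩ (Finset.Ici i₀)).Nonempty :=
          Finset.card_pos.1 (by omega)
        obtain ⟨k, hk⟩ := hne
        rw [Finset.mem_inter, Finset.mem_filter, Finset.mem_Ici] at hk
        exact ⟨k, ot_mono hot (hx _) (hx _) (hy _) (hy _) (hxm hk.1.2) (hym hk.2)⟩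
    · -- σ ≤ id
      apply key_le hmb hmc
      · rintro ⟨i, j, hij, hi, hj⟩
        obtain ⟨hxi, hyi⟩ := (ot_pos_iff hot hnzd (hx _) (hy _)).1 hi
        obtain ⟨hxj, hyj⟩ := (ot_pos_iff hot hnzd (hx _) (hy _)).1 hj
        have hσij : σ i ≠ σ j := fun hc => hij (σ.injective hc)
        have hn : 1 ≤ n := by
          have h1 := i.isLt; have h2 := j.isLt
          have h3 : (i:ℕ) ≠ (j:ℕ) := fun hc => hij (Fin.ext hc)
          omega
        obtain ⟨m, hmval⟩ : ∃ m : Fin (n+1), (m:ℕ) = n-1 := ⟨⟨n-1, by omega⟩, rfl⟩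
        have hmlast : m ≠ Fin.last n := by
          intro hc
          have hc' := congrArg Fin.val hc
          rw [hmval, Fin.val_last] at hc'
          omega
        have hxm' : 0 < x m := by
          rcases le_total (σ i) (σ j) with h | h
          · have : σ i ≤ m := by
              rw [Fin.le_def]
              have h1 := (σ j).isLt
              have h2 : (σ i : ℕ) ≠ (σ j : ℕ) := fun hc => hσij (Fin.ext hc)
              have h3 : (σ i : ℕ) ≤ (σ j : ℕ) := h
              rw [hmval]; omega
            exact lt_of_lt_of_le hxi (hxm this)
          · have : σ j ≤ m := by
              rw [Fin.le_def]
              have h1 := (σ i).isLt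
              have h2 : (σ i : ℕ) ≠ (σ j : ℕ) := fun hc => hσij (Fin.ext hc)
              have h3 : (σ j : ℕ) ≤ (σ i : ℕ) := h
              rw [hmval]; omega
            exact lt_of_lt_of_le hxj (hxm this)
        have hym' : 0 < y m := by
          rcases le_total i j with h | h
          · have : i ≤ m := by
              rw [Fin.le_def]
              have h1 := j.isLt
              have h2 : (i : ℕ) ≠ (j : ℕ) := fun hc => hij (Fin.ext hc)
              have h3 : (i : ℕ) ≤ (j : ℕ) := h
              rw [hmval]; omega
            exact lt_of_lt_of_le hyi (hym this)
          · have : j ≤ m := by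
              rw [Fin.le_def]
              have h1 := i.isLt
              have h2 : (i : ℕ) ≠ (j : ℕ) := fun hc => hij (Fin.ext hc)
              have h3 : (j : ℕ) ≤ (i : ℕ) := h
              rw [hmval]; omega
            exact lt_of_lt_of_le hyj (hym this)
        refine ⟨m, Fin.last n, hmlast, ?_, ?_⟩
        · exact (ot_pos_iff hot hnzd (hx _) (hy _)).2 ⟨hxm', hym'⟩
        · exact (ot_pos_iff hot hnzd (hx _) (hy _)).2
            ⟨lt_of_lt_of_le hxm' (hxm (Fin.le_last m)), lt_of_lt_of_le hym' (hym (Fin.le_last m))⟩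
      · intro i₀ _
        exact ⟨Fin.last n, ot_mono hot (hx _) (hx _) (hy _) (hy _)
          (hxm (Fin.le_last _)) (hym (Fin.le_last _))⟩
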